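/- Let R be a commutative semiring equipped with an involution * : R → R that is additive (preserves 0 and +), multiplicative ((xy)* = x*·y*), fixes 1, and satisfies x** = x. Then Spec_P(R), the set of prime k*-ideals of R with the Zariski topology, is compact and T0; moreover, for any unital semiring homomorphism i : R → S between such commutative *-semirings that preserves the involutions, the map Spec_P(S) → Spec_P(R) sending K to i⁻¹(K) is well-defined and continuous for the Zariski topologies. -/

import Mathlib

noncomputable section

/-- An ideal of a commutative semiring: contains `0`, closed under `+`, and
absorbs multiplication. -/
def SR.IsIdeal {R : Type*} [CommSemiring R] (J : Set R) : Prop :=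
  (0 : R) ∈ J ∧ (∀ a ∈ J, ∀ b ∈ J, a + b ∈ J) ∧ ∀ r : R, ∀ a ∈ J, r * a ∈ J

/-- A prime k*-ideal of a commutative *-semiring (with involution `st`): a
proper prime ideal which is a k-ideal closed under the involution. -/
def SR.IsPrimeKStarIdeal {R : Type*} [CommSemiring R] (st : R → R)
    (J : Set R) : Prop :=
  SR.IsIdeal J ∧ J ≠ Set.univ ∧
  (∀ a b : R, a * b ∈ J → a ∈ J ∨ b ∈ J) ∧
  (∀ a ∈ J, ∀ b : R, a + b ∈ J → b ∈ J) ∧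
  (∀ a ∈ J, st a ∈ J)

/-- The prime spectrum: the set of prime k*-ideals. -/
def SR.SpecP {R : Type*} [CommSemiring R] (st : R → R) : Type _ :=
  {J : Set R // SR.IsPrimeKStarIdeal st J}

/-- The Zariski topology on the prime spectrum, with basic closed sets
`V_P(J) = {K | J ⊆ K}` for ideals `J`. -/
def SR.zariskiP {R : Type*} [CommSemiring R] (st : R → R) :
    TopologicalSpace (SR.SpecP st) :=
  TopologicalSpace.generateFrom
    {U | ∃ J : Set R, SR.IsIdeal J ∧ U = {K : SR.SpecP st | J ⊆ K.1}ᶜ}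

open Set TopologicalSpace
open scoped Classical

namespace SRaux

variable {R : Type*} [CommSemiring R]

lemma univ_of_one_mem {J : Set R} (h : SR.IsIdeal J) (h1 : (1 : R) ∈ J) :
    J = Set.univ := by
  ext x
  simp only [Set.mem_univ, iff_true]
  simpa using h.2.2 x 1 h1

lemma one_not_mem {J : Set R} (h : SR.IsIdeal J) (hp : J ≠ Set.univ) : (1 : R) ∉ J :=
  fun h1 => hp (univ_of_one_mem h h1)

def princ (a : R) : Set R := {x : R | ∃ r : R, x = r * a}

lemma isIdeal_princ (a : R) : SR.IsIdeal (princ a) := by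
  refine ⟨⟨0, (zero_mul a).symm⟩, ?_, ?_⟩
  · rintro _ ⟨r, rfl⟩ _ ⟨s, rfl⟩
    exact ⟨r + s, (add_mul r s a).symm⟩
  · rintro r _ ⟨s, rfl⟩
    exact ⟨r * s, (mul_assoc r s a).symm⟩

variable (st : R → R)

lemma isOpen_basic {J : Set R} (hJ : SR.IsIdeal J) :
    @IsOpen _ (SR.zariskiP st) {K : SR.SpecP st | J ⊆ K.1}ᶜ :=
  @TopologicalSpace.isOpen_generateFrom_of_mem _ _ _ ⟨J, hJ, rfl⟩

/-- The "patch" embedding into `R → Bool`. -/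
def fB (K : SR.SpecP st) (r : R) : Bool := if r ∈ K.1 then true else false

lemma fB_true {K : SR.SpecP st} {r : R} : fB st K r = true ↔ r ∈ K.1 := by
  simp [fB]

lemma fB_false {K : SR.SpecP st} {r : R} : fB st K r = false ↔ r ∉ K.1 := by
  simp [fB]

/-- The closed conditions cutting out the range of `fB`. -/
def cond : Set (R → Bool) :=
  {g | g 0 = true} ∩ {g | g 1 = false} ∩
  (⋂ (a : R), ⋂ (b : R),
    ({g : R → Bool | g a = false} ∪ {g | g b = false} ∪ {g | g (a + b) = true})) ∩
  (⋂ (r : R), ⋂ (a : R),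
    ({g : R → Bool | g a = false} ∪ {g | g (r * a) = true})) ∩
  (⋂ (a : R), ⋂ (b : R),
    ({g : R → Bool | g (a * b) = false} ∪ {g | g a = true} ∪ {g | g b = true})) ∩
  (⋂ (a : R), ⋂ (b : R),
    ({g : R → Bool | g a = false} ∪ {g | g (a + b) = false} ∪ {g | g b = true})) ∩
  (⋂ (a : R), ({g : R → Bool | g a = false} ∪ {g | g (st a) = true}))

lemma range_fB : Set.range (fB st) = cond st := by
  ext g
  simp only [cond, Set.mem_inter_iff, Set.mem_iInter, Set.mem_union, Set.mem_setOf_eq,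
    Set.mem_range]
  constructor
  · rintro ⟨K, rfl⟩
    obtain ⟨⟨h0, hadd, hmul⟩, hproper, hprime, hk, hstar⟩ := K.2
    simp only [fB_true, fB_false]
    refine ⟨⟨⟨⟨⟨⟨h0, one_not_mem ⟨h0, hadd, hmul⟩ hproper⟩, ?_⟩, ?_⟩, ?_⟩, ?_⟩, ?_⟩
    · intro a b
      by_cases ha : a ∈ K.1
      · by_cases hb : b ∈ K.1
        · exact Or.inr (hadd a ha b hb)
        · exact Or.inl (Or.inr hb)
      · exact Or.inl (Or.inl ha)
    · intro r a
      by_cases ha : a ∈ K.1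
      · exact Or.inr (hmul r a ha)
      · exact Or.inl ha
    · intro a b
      by_cases hab : a * b ∈ K.1
      · rcases hprime a b hab with h | h
        · exact Or.inl (Or.inr h)
        · exact Or.inr h
      · exact Or.inl (Or.inl hab)
    · intro a b
      by_cases ha : a ∈ K.1
      · by_cases hab : a + b ∈ K.1
        · exact Or.inr (hk a ha b hab)
        · exact Or.inl (Or.inr hab)
      · exact Or.inl (Or.inl ha)
    · intro a
      by_cases ha : a ∈ K.1
      · exact Or.inr (hstar a ha)
      · exact Or.inl ha
  · rintro ⟨⟨⟨⟨⟨⟨h0, h1⟩, hadd⟩, hmul⟩, hprime⟩, hk⟩, hstar⟩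
    have hJ : SR.IsIdeal {r : R | g r = true} := by
      refine ⟨h0, ?_, ?_⟩
      · intro a ha b hb
        rcases hadd a b with (h | h) | h
        · simp [h] at ha
        · simp [h] at hb
        · exact h
      · intro r a ha
        rcases hmul r a with h | h
        · simp [h] at ha
        · exact h
    refine ⟨⟨{r : R | g r = true}, hJ, ?_, ?_, ?_, ?_⟩, ?_⟩
    · intro hU
      have : g 1 = true := by rw [← Set.mem_setOf_eq (p := fun r => g r = true), hU]; trivial
      simp [h1] at this
    · intro a b hab
      rcases hprime a b with (h | h) | h
      · simp [h] at hab
      · exact Or.inl h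
      · exact Or.inr h
    · intro a ha b hab
      rcases hk a b with (h | h) | h
      · simp [h] at ha
      · simp [h] at hab
      · exact h
    · intro a ha
      rcases hstar a with h | h
      · simp [h] at ha
      · exact h
    · funext r
      cases hgr : g r with
      | true => simp [fB, Set.mem_setOf_eq, hgr]
      | false => simp [fB, Set.mem_setOf_eq, hgr]

lemma isClosed_eval (a : R) (b : Bool) : IsClosed {g : R → Bool | g a = b} := by
  have : {g : R → Bool | g a = b} = (fun g : R → Bool => g a) ⁻¹' {b} := rfl
  rw [this]
  exact (isClosed_discrete _).preimage (continuous_apply a)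

lemma isClosed_cond : IsClosed (cond st) := by
  unfold cond
  refine ((((((isClosed_eval 0 true).inter (isClosed_eval 1 false)).inter ?_).inter
      ?_).inter ?_).inter ?_).inter ?_
  · exact isClosed_iInter fun a => isClosed_iInter fun b =>
      (((isClosed_eval a false).union (isClosed_eval b false)).union
        (isClosed_eval (a + b) true))
  · exact isClosed_iInter fun r => isClosed_iInter fun a =>
      ((isClosed_eval a false).union (isClosed_eval (r * a) true))
  · exact isClosed_iInter fun a => isClosed_iInter fun b =>
      (((isClosed_eval (a * b) false).union (isClosed_eval a true)).union
        (isClosed_eval b true))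
  · exact isClosed_iInter fun a => isClosed_iInter fun b =>
      (((isClosed_eval a false).union (isClosed_eval (a + b) false)).union
        (isClosed_eval b true))
  · exact isClosed_iInter fun a =>
      ((isClosed_eval a false).union (isClosed_eval (st a) true))

lemma compactSpace : @CompactSpace (SR.SpecP st) (SR.zariskiP st) := by
  letI tp : TopologicalSpace (SR.SpecP st) := TopologicalSpace.induced (fB st) inferInstance
  have hind : @Topology.IsInducing _ _ tp _ (fB st) := ⟨rfl⟩
  have hcl : IsClosed (Set.range (fB st)) := by
    rw [range_fB]; exact isClosed_cond st
  have hcp : @CompactSpace (SR.SpecP st) tp := by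
    constructor
    rw [hind.isCompact_iff]
    simpa [Set.image_univ] using hcl.isCompact
  have hle : tp ≤ SR.zariskiP st := by
    apply le_generateFrom
    rintro U ⟨J, hJ, rfl⟩
    rw [isOpen_compl_iff]
    have hV : {K : SR.SpecP st | J ⊆ K.1} = ⋂ a ∈ J, (fB st) ⁻¹' {g | g a = true} := by
      ext K
      simp only [Set.mem_setOf_eq, Set.subset_def, Set.mem_iInter, Set.mem_preimage,
        fB_true]
    rw [hV]
    exact isClosed_biInter fun a _ =>
      (isClosed_eval a true).preimage continuous_induced_dom
  have h1 : @IsCompact _ tp Set.univ := @isCompact_univ _ tp hcp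
  have hcont : @Continuous _ _ tp (SR.zariskiP st) id := continuous_id_of_le hle
  have himg := @IsCompact.image _ _ tp (SR.zariskiP st) _ _ h1 hcont
  exact @CompactSpace.mk _ (SR.zariskiP st) (by simpa using himg)

lemma t0Space : @T0Space (SR.SpecP st) (SR.zariskiP st) := by
  letI := SR.zariskiP st
  refine ⟨fun x y h => ?_⟩
  have h' := inseparable_iff_forall_isOpen.mp h
  have key : ∀ u v : SR.SpecP st, (∀ U, IsOpen U → (u ∈ U ↔ v ∈ U)) → u.1 ⊆ v.1 := by
    intro u v hUV a ha
    by_contra hav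
    have hopen : IsOpen {K : SR.SpecP st | princ a ⊆ K.1}ᶜ := isOpen_basic st (isIdeal_princ a)
    have hiff := hUV _ hopen
    have hv : v ∈ {K : SR.SpecP st | princ a ⊆ K.1}ᶜ := by
      intro hvmem
      exact hav (hvmem ⟨1, (one_mul a).symm⟩)
    have hu : u ∈ {K : SR.SpecP st | princ a ⊆ K.1}ᶜ := hiff.mpr hv
    apply hu
    rintro _ ⟨r, rfl⟩
    exact u.2.1.2.2 r a ha
  exact Subtype.ext (Set.Subset.antisymm (key x y h')
    (key y x fun U hU => (h' U hU).symm))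

end SRaux

/-- For a commutative *-semiring `R`, `Spec_P(R)` with the
Zariski topology is compact and T0; and for any unital semiring homomorphism
`i : R → S` preserving the involutions, `K ↦ i⁻¹(K)` is a well-defined
continuous map `Spec_P(S) → Spec_P(R)`. -/
theorem specP_compact_t0_functorial
    {R S : Type*} [CommSemiring R] [CommSemiring S]
    (stR : R → R)
    (hR0 : stR 0 = 0) (hRadd : ∀ a b : R, stR (a + b) = stR a + stR b)
    (hRmul : ∀ a b : R, stR (a * b) = stR a * stR b)
    (hR1 : stR 1 = 1) (hRR : ∀ a : R, stR (stR a) = a)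
    (stS : S → S)
    (hS0 : stS 0 = 0) (hSadd : ∀ a b : S, stS (a + b) = stS a + stS b)
    (hSmul : ∀ a b : S, stS (a * b) = stS a * stS b)
    (hS1 : stS 1 = 1) (hSS : ∀ a : S, stS (stS a) = a)
    (i : R →+* S) (hi : ∀ a : R, i (stR a) = stS (i a)) :
    @CompactSpace (SR.SpecP stR) (SR.zariskiP stR) ∧
    @T0Space (SR.SpecP stR) (SR.zariskiP stR) ∧
    ∃ F : SR.SpecP stS → SR.SpecP stR,
      (∀ K : SR.SpecP stS, (F K).1 = ⇑i ⁻¹' K.1) ∧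
      @Continuous _ _ (SR.zariskiP stS) (SR.zariskiP stR) F := by
  refine ⟨SRaux.compactSpace stR, SRaux.t0Space stR, ?_⟩
  -- well-definedness
  have hF : ∀ K : SR.SpecP stS, SR.IsPrimeKStarIdeal stR (⇑i ⁻¹' K.1) := by
    intro K
    obtain ⟨⟨h0, hadd, hmul⟩, hp, hpr, hk, hst⟩ := K.2
    refine ⟨⟨?_, ?_, ?_⟩, ?_, ?_, ?_, ?_⟩
    · show i 0 ∈ K.1; rw [map_zero]; exact h0
    · intro a ha b hb; show i (a + b) ∈ K.1; rw [map_add]; exact hadd _ ha _ hb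
    · intro r a ha; show i (r * a) ∈ K.1; rw [map_mul]; exact hmul _ _ ha
    · intro hU
      apply SRaux.one_not_mem ⟨h0, hadd, hmul⟩ hp
      have h1 : (1 : R) ∈ ⇑i ⁻¹' K.1 := hU ▸ Set.mem_univ 1
      simpa [map_one] using h1
    · intro a b hab
      apply hpr
      rw [← map_mul]
      exact hab
    · intro a ha b hab
      have hab' : i (a + b) ∈ K.1 := hab
      rw [map_add] at hab'
      exact hk (i a) ha (i b) hab'
    · intro a ha
      show i (stR a) ∈ K.1
      rw [hi]
      exact hst _ ha
  refine ⟨fun K => ⟨⇑i ⁻¹' K.1, hF K⟩, fun K => rfl, ?_⟩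
  -- continuity
  letI := SR.zariskiP stS
  letI := SR.zariskiP stR
  refine continuous_generateFrom_iff.mpr ?_
  rintro U ⟨J, hJ, rfl⟩
  -- the ideal of S generated by i '' J
  set T : Set S := {x : S | ∃ s : S, ∃ a ∈ J, x = s * i a} with hT
  set J' : Set S := (AddSubmonoid.closure T : Set S) with hJ'
  have hJ'ideal : SR.IsIdeal J' := by
    refine ⟨(AddSubmonoid.closure T).zero_mem, ?_, ?_⟩
    · intro a ha b hb
      exact (AddSubmonoid.closure T).add_mem ha hb
    · intro r x hx
      -- the set of x with r*x ∈ closure T is an AddSubmonoid containing T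
      let M' : AddSubmonoid S :=
        { carrier := {x : S | r * x ∈ AddSubmonoid.closure T}
          zero_mem' := by
            simp only [Set.mem_setOf_eq, mul_zero]
            exact (AddSubmonoid.closure T).zero_mem
          add_mem' := by
            intro a b ha hb
            simp only [Set.mem_setOf_eq, mul_add] at *
            exact (AddSubmonoid.closure T).add_mem ha hb }
      have hTM : T ⊆ M' := by
        rintro _ ⟨s, a, haJ, rfl⟩
        show r * (s * i a) ∈ AddSubmonoid.closure T
        exact AddSubmonoid.subset_closure ⟨r * s, a, haJ, (mul_assoc r s (i a)).symm⟩
      exact AddSubmonoid.closure_le.mpr hTM hx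
  have hkey : ∀ K : SR.SpecP stS, (J ⊆ ⇑i ⁻¹' K.1 ↔ J' ⊆ K.1) := by
    intro K
    constructor
    · intro hsub
      let Ksub : AddSubmonoid S :=
        { carrier := K.1
          zero_mem' := K.2.1.1
          add_mem' := fun ha hb => K.2.1.2.1 _ ha _ hb }
      have hTK : T ⊆ Ksub := by
        rintro _ ⟨s, a, haJ, rfl⟩
        exact K.2.1.2.2 s _ (hsub haJ)
      exact AddSubmonoid.closure_le.mpr hTK
    · intro hsub a haJ
      have : i a ∈ J' :=
        AddSubmonoid.subset_closure ⟨1, a, haJ, (one_mul (i a)).symm⟩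
      exact hsub this
  have heq : (fun K : SR.SpecP stS => (⟨⇑i ⁻¹' K.1, hF K⟩ : SR.SpecP stR)) ⁻¹'
      {K : SR.SpecP stR | J ⊆ K.1}ᶜ = {K : SR.SpecP stS | J' ⊆ K.1}ᶜ := by
    ext K
    simp only [Set.mem_preimage, Set.mem_compl_iff, Set.mem_setOf_eq]
    exact not_congr (hkey K)
  refine (congrArg IsOpen heq).mpr ?_
  exact SRaux.isOpen_basic stS hJ'ideal
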